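/- Let f : ℝ^d → ℝ be differentiable, coordinate-wise glocally (L, L_*, δ)-smooth, and μ₁-strongly convex in the 1-norm: f(v) ≥ f(u) + ⟨∇f(u), v − u⟩ + (μ₁/2)‖v − u‖₁² for all u, v. Assume Δ₀ = f(w₀) − f_* > δ > ε > 0. Let (w_t) be greedy coordinate descent: at each t choose j_t ∈ argmax_j |∇_{j}f(w_t)| and set w_{t+1} = w_t − η_t∇_{j_t}f(w_t)e_{j_t}, where η_t is chosen by exact coordinate line optimization, i.e. f(w_{t+1}) ≤ f(w_t − η∇_{j_t}f(w_t)e_{j_t}) for all η ∈ ℝ. Then f(w_T) − f_* ≤ ε for every natural number T with T ≥ ⌈(L/μ₁)log(Δ₀/δ)⌉ + ⌈(L_*/μ₁)log(δ/ε)⌉. -/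

import Mathlib

open scoped RealInnerProductSpace


lemma coord_deriv {d : ℕ} (f : EuclideanSpace ℝ (Fin d) → ℝ)
    (f' : EuclideanSpace ℝ (Fin d) → EuclideanSpace ℝ (Fin d))
    (hdiff : ∀ x, HasGradientAt f (f' x) x)
    (u : EuclideanSpace ℝ (Fin d)) (j : Fin d) (β : ℝ) :
    HasDerivAt (fun r : ℝ => f (u + r • EuclideanSpace.single j (1 : ℝ)))
      (f' (u + β • EuclideanSpace.single j (1 : ℝ)) j) β := by
  have hline : HasDerivAt (fun r : ℝ => u + r • EuclideanSpace.single j (1 : ℝ))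
      (EuclideanSpace.single j (1 : ℝ)) β := by
    simpa using ((hasDerivAt_id β).smul_const (EuclideanSpace.single j (1 : ℝ))).const_add u
  have h := ((hdiff (u + β • EuclideanSpace.single j (1 : ℝ))).hasFDerivAt).comp_hasDerivAt β hline
  simpa [InnerProductSpace.toDual_apply_apply, EuclideanSpace.inner_single_right, Function.comp_def] using h

lemma descent_lemma {d : ℕ} (f : EuclideanSpace ℝ (Fin d) → ℝ)
    (f' : EuclideanSpace ℝ (Fin d) → EuclideanSpace ℝ (Fin d))
    (hdiff : ∀ x, HasGradientAt f (f' x) x)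
    (u : EuclideanSpace ℝ (Fin d)) (j : Fin d) (α C : ℝ)
    (hlip : ∀ β : ℝ, |β| ≤ |α| → 0 ≤ β * α →
      |f' (u + β • EuclideanSpace.single j (1 : ℝ)) j - f' u j| ≤ C * |β|) :
    f (u + α • EuclideanSpace.single j (1 : ℝ)) ≤ f u + α * f' u j + C / 2 * α ^ 2 := by
  set e := EuclideanSpace.single j (1 : ℝ) with he
  set g := f' u j with hg
  set h : ℝ → ℝ := fun β => f (u + β • e) - (β * g + C / 2 * β ^ 2) with hh
  have hd : ∀ β : ℝ, HasDerivAt h (f' (u + β • e) j - (g + C * β)) β := by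
    intro β
    have ha := coord_deriv f f' hdiff u j β
    have hb : HasDerivAt (fun β : ℝ => β * g + C / 2 * β ^ 2) (g + C * β) β := by
      have := ((hasDerivAt_id β).mul_const g).add ((hasDerivAt_pow 2 β).const_mul (C / 2))
      exact this.congr_deriv (by simp; ring)
    exact ha.sub hb
  rcases lt_trichotomy α 0 with hα | hα | hα
  · obtain ⟨c, hc, hceq⟩ := exists_hasDerivAt_eq_slope h
      (fun β => f' (u + β • e) j - (g + C * β))
      hα (fun x _ => (hd x).continuousAt.continuousWithinAt) (fun x _ => hd x)
    have hcneg : c < 0 := hc.2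
    have hcabs : |c| ≤ |α| := by
      rw [abs_of_neg hcneg, abs_of_neg hα]; linarith [hc.1]
    have hlc := abs_le.1 (hlip c hcabs (by nlinarith [hc.1, hc.2]))
    rw [abs_of_neg hcneg] at hlc
    have hslope : 0 ≤ (h 0 - h α) / (0 - α) := by
      rw [← hceq]; linarith [hlc.1]
    rw [le_div_iff₀ (by linarith : (0:ℝ) < 0 - α)] at hslope
    have h0 : h α ≤ h 0 := by linarith
    simp only [hh, zero_smul, add_zero] at h0
    linarith [h0]
  · subst hα; simp
  · obtain ⟨c, hc, hceq⟩ := exists_hasDerivAt_eq_slope h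
      (fun β => f' (u + β • e) j - (g + C * β))
      hα (fun x _ => (hd x).continuousAt.continuousWithinAt) (fun x _ => hd x)
    have hcpos : 0 < c := hc.1
    have hcabs : |c| ≤ |α| := by
      rw [abs_of_pos hcpos, abs_of_pos hα]; linarith [hc.2]
    have hlc := abs_le.1 (hlip c hcabs (by nlinarith [hc.1, hc.2]))
    rw [abs_of_pos hcpos] at hlc
    have hslope : (h α - h 0) / (α - 0) ≤ 0 := by
      rw [← hceq]; linarith [hlc.2]
    rw [div_le_iff₀ (by linarith : (0:ℝ) < α - 0)] at hslope
    have h0 : h α ≤ h 0 := by linarith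
    simp only [hh, zero_smul, add_zero] at h0
    linarith [h0]

lemma pl_lemma {d : ℕ} (f : EuclideanSpace ℝ (Fin d) → ℝ)
    (f' : EuclideanSpace ℝ (Fin d) → EuclideanSpace ℝ (Fin d))
    (μ₁ fstar : ℝ) (hμ₁ : 0 < μ₁)
    (hsc : ∀ u v : EuclideanSpace ℝ (Fin d),
      f v ≥ f u + ⟪f' u, v - u⟫ + μ₁ / 2 * (∑ i, |v i - u i|) ^ 2)
    (hmin : ∃ wstar, f wstar = fstar ∧ ∀ x, fstar ≤ f x)
    (u : EuclideanSpace ℝ (Fin d)) (G : ℝ) (hG : ∀ j, |f' u j| ≤ G) :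
    2 * μ₁ * (f u - fstar) ≤ G ^ 2 := by
  obtain ⟨ws, hws, -⟩ := hmin
  have h := hsc u ws
  set S := ∑ i, |ws i - u i| with hS
  have hinner : ⟪f' u, ws - u⟫ ≥ -(G * S) := by
    have h1 : |⟪f' u, ws - u⟫| ≤ G * S := by
      rw [PiLp.inner_apply]
      simp only [RCLike.inner_apply, conj_trivial]
      rw [Finset.sum_congr rfl (fun i _ => mul_comm ((ws - u) i) (f' u i))]
      calc |∑ i, f' u i * (ws - u) i| ≤ ∑ i, |f' u i * (ws - u) i| :=
            Finset.abs_sum_le_sum_abs _ _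
        _ ≤ ∑ i, G * |ws i - u i| := by
            apply Finset.sum_le_sum
            intro i _
            rw [abs_mul]
            have : (ws - u) i = ws i - u i := by simp
            rw [this]
            exact mul_le_mul_of_nonneg_right (hG i) (abs_nonneg _)
        _ = G * S := by rw [hS, Finset.mul_sum]
    linarith [(abs_le.1 h1).1]
  nlinarith [sq_nonneg (μ₁ * S - G), hws ▸ h]

lemma combo_lemma {d : ℕ} (f : EuclideanSpace ℝ (Fin d) → ℝ)
    (f' : EuclideanSpace ℝ (Fin d) → EuclideanSpace ℝ (Fin d))
    (μ₁ : ℝ) (hμ₁ : 0 < μ₁)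
    (hsc : ∀ u v : EuclideanSpace ℝ (Fin d),
      f v ≥ f u + ⟪f' u, v - u⟫ + μ₁ / 2 * (∑ i, |v i - u i|) ^ 2)
    (u v : EuclideanSpace ℝ (Fin d)) (t : ℝ) (ht0 : 0 ≤ t) (ht1 : t ≤ 1) :
    f ((1 - t) • u + t • v) ≤ max (f u) (f v) := by
  set m := (1 - t) • u + t • v with hm
  have h1 : f u ≥ f m + ⟪f' m, u - m⟫ := by
    have := hsc m u
    nlinarith [sq_nonneg (∑ i, |u i - m i|)]
  have h2 : f v ≥ f m + ⟪f' m, v - m⟫ := by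
    have := hsc m v
    nlinarith [sq_nonneg (∑ i, |v i - m i|)]
  have hzero : (1 - t) • (u - m) + t • (v - m) = (0 : EuclideanSpace ℝ (Fin d)) := by
    rw [hm]; module
  have hsum : (1 - t) * ⟪f' m, u - m⟫ + t * ⟪f' m, v - m⟫ = 0 := by
    rw [← real_inner_smul_right, ← real_inner_smul_right, ← inner_add_right, hzero,
      inner_zero_right]
  have hfm : f m ≤ (1 - t) * f u + t * f v := by
    nlinarith [mul_le_mul_of_nonneg_left h1 (by linarith : (0:ℝ) ≤ 1 - t),
      mul_le_mul_of_nonneg_left h2 ht0]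
  calc f m ≤ (1 - t) * f u + t * f v := hfm
    _ ≤ (1 - t) * max (f u) (f v) + t * max (f u) (f v) := by
        gcongr <;> [exact le_max_left _ _; exact le_max_right _ _]
    _ = max (f u) (f v) := by ring

lemma poly_aux (c A k m : ℝ) (hc : 0 < c) (hA : 0 < A) (hk : 0 < k) (hk1 : k ≤ 1/2)
    (hk2 : 2 * A * k ≤ c) (hm0 : 0 ≤ m) (hm1 : m < 1) :
    A / 2 * (k * (1 - m)) ^ 2 ≤ c / 2 * m * (1 - m) + (k * (1 - m)) * c * (1/2 - m) := by
  nlinarith [mul_nonneg (mul_nonneg hc.le (by linarith : (0:ℝ) ≤ 1 - m))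
      (mul_nonneg hm0 (by linarith : (0:ℝ) ≤ 1/2 - k)),
    mul_nonneg (mul_nonneg (by linarith : (0:ℝ) ≤ c - 2 * A * k) hk.le) (sq_nonneg (1 - m)),
    mul_nonneg (mul_nonneg (mul_nonneg hc.le hk.le) (by linarith : (0:ℝ) ≤ 1 - m)) hm0,
    mul_nonneg (mul_nonneg (mul_nonneg hc.le hk.le) (by linarith : (0:ℝ) ≤ 1 - m))
      (by linarith : (0:ℝ) ≤ 1 - m)]


lemma linear_aux (F2 F1 fu Fd α g c m s A L Ls : ℝ)
    (hdesc_s : F2 ≤ F1 + s * α * Fd + L / 2 * (s * α) ^ 2)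
    (hdesc_m : F1 ≤ fu + m * α * g + Ls / 2 * (m * α) ^ 2)
    (eq1 : m * α * g = -(c * m))
    (eq2 : Ls / 2 * (m * α) ^ 2 = c / 2 * m ^ 2)
    (h10 : s * (α * Fd) ≤ s * (α * g + c * m))
    (hexpand : s * (α * g + c * m) = -(s * c) + s * (c * m))
    (eq4 : L / 2 * (s * α) ^ 2 = A / 2 * s ^ 2)
    (hpoly : A / 2 * s ^ 2 ≤ c / 2 * m * (1 - m) + s * c * (1 / 2 - m)) :
    F2 ≤ fu + -((m + s) * c / 2) := by
  linarith

set_option maxHeartbeats 1000000 in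
lemma local_decrease {d : ℕ} (f : EuclideanSpace ℝ (Fin d) → ℝ)
    (f' : EuclideanSpace ℝ (Fin d) → EuclideanSpace ℝ (Fin d))
    (L Ls δ μ₁ fstar : ℝ) (hL : 0 < L) (hLs : 0 < Ls) (hμ₁ : 0 < μ₁)
    (hdiff : ∀ x, HasGradientAt f (f' x) x)
    (hglob : ∀ (u : EuclideanSpace ℝ (Fin d)) (j : Fin d) (α : ℝ),
      |f' (u + α • EuclideanSpace.single j (1 : ℝ)) j - f' u j| ≤ L * |α|)
    (hloc : ∀ (u : EuclideanSpace ℝ (Fin d)) (j : Fin d) (α : ℝ),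
      f u - fstar ≤ δ → f (u + α • EuclideanSpace.single j (1 : ℝ)) - fstar ≤ δ →
      |f' (u + α • EuclideanSpace.single j (1 : ℝ)) j - f' u j| ≤ Ls * |α|)
    (hsc : ∀ u v : EuclideanSpace ℝ (Fin d),
      f v ≥ f u + ⟪f' u, v - u⟫ + μ₁ / 2 * (∑ i, |v i - u i|) ^ 2)
    (u : EuclideanSpace ℝ (Fin d)) (j : Fin d) (hsub : f u - fstar ≤ δ) :
    f (u + (-(f' u j / Ls)) • EuclideanSpace.single j (1 : ℝ)) ≤
      f u - (f' u j) ^ 2 / (2 * Ls) := by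
  set e := EuclideanSpace.single j (1 : ℝ) with he
  set g := f' u j with hg
  by_cases hg0 : g = 0
  · simp [hg0]
  set α := -(g / Ls) with hα
  have hα0 : α ≠ 0 := by
    simp only [hα, ne_eq, neg_eq_zero, div_eq_zero_iff]
    push_neg
    exact ⟨hg0, fun h => absurd h (ne_of_gt hLs)⟩
  have hα2 : 0 < α ^ 2 := by positivity
  have hLsα : Ls * α = -g := by rw [hα]; field_simp
  obtain ⟨c, hcdef⟩ : ∃ c : ℝ, c = g ^ 2 / Ls := ⟨_, rfl⟩
  have hc : 0 < c := by rw [hcdef]; positivity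
  have e2 : α * g = -c := by
    rw [hcdef, hα]; ring
  have hLsα2 : Ls * α ^ 2 = c := by
    rw [← neg_neg c, ← e2]; linear_combination α * hLsα
  set Ψ : ℝ → ℝ := fun r => f (u + (r * α) • e) with hΨ
  have hΨ0 : Ψ 0 = f u := by simp [hΨ]
  have hΨd : ∀ r : ℝ, HasDerivAt Ψ (f' (u + (r * α) • e) j * α) r := by
    intro r
    have h1 := coord_deriv f f' hdiff u j (r * α)
    have h2 : HasDerivAt (fun r : ℝ => r * α) α r := hasDerivAt_mul_const α
    exact h1.comp r h2
  have hΨcont : Continuous Ψ := by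
    have : Differentiable ℝ Ψ := fun r => (hΨd r).differentiableAt
    exact this.continuous
  set S : Set ℝ := {r : ℝ | r ∈ Set.Icc (0:ℝ) 1 ∧ Ψ r ≤ Ψ 0 + r * (α * g / 2)} with hSdef
  have hS0 : (0:ℝ) ∈ S := by
    constructor
    · exact ⟨le_refl 0, zero_le_one⟩
    · simp
  have hSclosed : IsClosed S := by
    have : S = Set.Icc (0:ℝ) 1 ∩ {r : ℝ | Ψ r ≤ Ψ 0 + r * (α * g / 2)} := rfl
    rw [this]
    exact isClosed_Icc.inter (isClosed_le hΨcont (by continuity))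
  have hSbdd : BddAbove S := ⟨1, fun r hr => hr.1.2⟩
  set m := sSup S with hm
  have hmS : m ∈ S := hSclosed.csSup_mem ⟨0, hS0⟩ hSbdd
  have hm0 : 0 ≤ m := le_csSup hSbdd hS0
  have hm1 : m ≤ 1 := hmS.1.2
  have hΨm : Ψ m ≤ Ψ 0 + m * (α * g / 2) := hmS.2
  have hmc : m * (α * g) = -(m * c) := by linear_combination m * e2
  clear_value m
  have hΨm0 : Ψ m ≤ Ψ 0 := by
    have h9 : Ψ m ≤ Ψ 0 + m * (α * g / 2) := hΨm
    rw [show m * (α * g / 2) = m * (α * g) / 2 by ring, hmc] at h9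
    linarith [mul_nonneg hm0 hc.le]
  -- all points in [0, m] are below Ψ 0
  have hseg : ∀ r : ℝ, 0 ≤ r → r ≤ m → Ψ r ≤ Ψ 0 := by
    intro r hr0 hrm
    rcases eq_or_lt_of_le hm0 with hm0' | hm0'
    · have : r = 0 := le_antisymm (hrm.trans hm0'.symm.le) hr0
      rw [this]
    · set t := r / m with ht
      have ht0 : 0 ≤ t := div_nonneg hr0 hm0
      have ht1 : t ≤ 1 := (div_le_one hm0').mpr hrm
      have htm : t * m = r := div_mul_cancel₀ r (ne_of_gt hm0')
      have hcombo := combo_lemma f f' μ₁ hμ₁ hsc u (u + (m * α) • e) t ht0 ht1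
      have hid : (1 - t) • u + t • (u + (m * α) • e) = u + (r * α) • e := by
        rw [smul_add, ← add_assoc, ← add_smul, smul_smul]
        have h5 : t * (m * α) = r * α := by rw [← htm]; ring
        rw [h5]
        congr 1
        module
      rw [hid] at hcombo
      calc Ψ r ≤ max (f u) (f (u + (m * α) • e)) := hcombo
        _ = f u := by
            rw [max_eq_left]
            rw [← hΨ0]; exact hΨm0
        _ = Ψ 0 := hΨ0.symm
  have hsublevel : ∀ r : ℝ, 0 ≤ r → r ≤ m → f (u + (r * α) • e) - fstar ≤ δ := by
    intro r hr0 hrm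
    have := hseg r hr0 hrm
    rw [hΨ0] at this
    linarith
  -- Lipschitz hypothesis on the segment [0, m α]
  have hlipm : ∀ β : ℝ, |β| ≤ |m * α| → 0 ≤ β * (m * α) →
      |f' (u + β • e) j - f' u j| ≤ Ls * |β| := by
    intro β hβ hβsign
    have hβ0 : 0 ≤ β * α := by
      rcases eq_or_lt_of_le hm0 with h | h
      · have hβz : β = 0 := by
          have h1 := hβ
          rw [← h, zero_mul, abs_zero] at h1
          exact abs_nonpos_iff.1 h1
        rw [hβz, zero_mul]
      · nlinarith
    have hr0 : 0 ≤ β / α := by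
      have h6 : β / α = β * α / α ^ 2 := by field_simp
      rw [h6]
      exact div_nonneg hβ0 (sq_nonneg α)
    have hrm : β / α ≤ m := by
      have h6 : β / α = β * α / α ^ 2 := by field_simp
      rw [h6, div_le_iff₀ hα2]
      calc β * α ≤ |β * α| := le_abs_self _
        _ = |β| * |α| := abs_mul _ _
        _ ≤ |m * α| * |α| := mul_le_mul_of_nonneg_right hβ (abs_nonneg α)
        _ = m * α ^ 2 := by rw [abs_mul, abs_of_nonneg hm0, ← sq_abs α]; ring
    have hβeq : β / α * α = β := div_mul_cancel₀ β hα0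
    have hs1 := hsublevel (β / α) hr0 hrm
    rw [hβeq] at hs1
    exact hloc u j β hsub hs1
  -- descent bound up to m
  have hdesc_m : f (u + (m * α) • e) ≤ f u + (m * α) * g + Ls / 2 * (m * α) ^ 2 :=
    descent_lemma f f' hdiff u j (m * α) Ls hlipm
  rcases eq_or_lt_of_le hm1 with hm1' | hm1'
  · -- m = 1 : conclude
    have hfin := hΨm
    rw [hm1', hΨ0] at hfin
    have h1pt : Ψ 1 = f (u + α • e) := by
      show f (u + ((1:ℝ) * α) • e) = f (u + α • e)
      rw [one_mul]
    rw [h1pt] at hfin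
    have hval : 1 * (α * g / 2) = -(g ^ 2 / (2 * Ls)) := by
      rw [e2, hcdef]; ring
    rw [hval] at hfin
    linarith
  · exfalso
    -- bound on the partial derivative at the point m
    have hsubm := hsublevel m hm0 le_rfl
    have hBabs := hloc u j (m * α) hsub hsubm
    have hB : α * f' (u + (m * α) • e) j ≤ α * g + c * m := by
      have h3 : α * (f' (u + (m * α) • e) j - g) ≤ |α| * (Ls * |m * α|) := by
        calc α * (f' (u + (m * α) • e) j - g) ≤ |α * (f' (u + (m * α) • e) j - g)| :=
              le_abs_self _
          _ = |α| * |f' (u + (m * α) • e) j - g| := abs_mul _ _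
          _ ≤ |α| * (Ls * |m * α|) := mul_le_mul_of_nonneg_left hBabs (abs_nonneg α)
      have h5 : |α| * (Ls * |m * α|) = Ls * α ^ 2 * m := by
        rw [abs_mul, abs_of_nonneg hm0, ← sq_abs α]; ring
      rw [h5, hLsα2] at h3
      nlinarith [h3]
    obtain ⟨A, hA⟩ : ∃ A : ℝ, A = L * α ^ 2 := ⟨_, rfl⟩
    have hApos : 0 < A := by rw [hA]; positivity
    obtain ⟨k, hk⟩ : ∃ k : ℝ, k = min (1/2 : ℝ) (c / (2 * A)) := ⟨_, rfl⟩
    have hkpos : 0 < k := by rw [hk]; exact lt_min (by norm_num) (by positivity)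
    have hk1 : k ≤ 1/2 := by rw [hk]; exact min_le_left _ _
    have hk2 : 2 * A * k ≤ c := by
      have h7 : k ≤ c / (2 * A) := by rw [hk]; exact min_le_right _ _
      rw [le_div_iff₀ (by positivity : (0:ℝ) < 2 * A)] at h7
      nlinarith [h7]
    obtain ⟨s, hs⟩ : ∃ s : ℝ, s = k * (1 - m) := ⟨_, rfl⟩
    have hspos : 0 < s := by rw [hs]; exact mul_pos hkpos (by linarith)
    have hms1 : m + s ≤ 1 := by nlinarith [hs]
    -- descent from the point m with the global constant
    have hdesc_s : f (u + ((m + s) * α) • e) ≤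
        f (u + (m * α) • e) + (s * α) * f' (u + (m * α) • e) j + L / 2 * (s * α) ^ 2 := by
      have h7 := descent_lemma f f' hdiff (u + (m * α) • e) j (s * α) L
        (fun β _ _ => hglob (u + (m * α) • e) j β)
      have hpt2 : u + (m * α) • e + (s * α) • e = u + ((m + s) * α) • e := by
        rw [add_assoc, ← add_smul]
        congr 2
        ring
      rw [hpt2] at h7
      exact h7
    -- m + s is in S : contradiction with the supremum
    have eq1 : (m * α) * g = -(c * m) := by linear_combination m * e2
    have eq2 : Ls / 2 * (m * α) ^ 2 = c / 2 * m ^ 2 := by linear_combination (m ^ 2 / 2) * hLsα2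
    have h10 := mul_le_mul_of_nonneg_left hB hspos.le
    have eq3 : s * (α * g) = -(s * c) := by linear_combination s * e2
    have eq4 : L / 2 * (s * α) ^ 2 = A / 2 * s ^ 2 := by rw [hA]; ring
    have hpoly := poly_aux c A k m hc hApos hkpos hk1 hk2 hm0 hm1'
    rw [← hs] at hpoly
    have eq5 : (m + s) * (α * g / 2) = -((m + s) * c / 2) := by
      linear_combination ((m + s) / 2) * e2
    have hkey : Ψ (m + s) ≤ Ψ 0 + (m + s) * (α * g / 2) := by
      rw [hΨ0, eq5]
      show f (u + ((m + s) * α) • e) ≤ f u + -((m + s) * c / 2)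
      have hexpand : s * (α * g + c * m) = -(s * c) + s * (c * m) := by
        linear_combination s * e2
      exact linear_aux _ _ _ _ _ _ _ _ _ _ _ _ hdesc_s hdesc_m eq1 eq2 h10 hexpand eq4 hpoly
    have hmem : m + s ∈ S := ⟨⟨by linarith, hms1⟩, hkey⟩
    have hle := le_csSup hSbdd hmem
    linarith

lemma exp_pow_bound (μ C X Y : ℝ) (hμ : 0 < μ) (hC : 0 < C) (hX : 0 < X) (hY : 0 < Y)
    (N : ℕ) (hN : C / μ * Real.log (X / Y) ≤ (N : ℝ)) :
    Real.exp (-(μ / C)) ^ N * X ≤ Y := by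
  have hlog : Real.log (X / Y) ≤ (N : ℝ) * (μ / C) := by
    rw [div_mul_eq_mul_div, div_le_iff₀ hμ] at hN
    rw [← mul_div_assoc, le_div_iff₀ hC]
    nlinarith [hN]
  have h1 : Real.exp ((N : ℝ) * -(μ / C)) ≤ Y / X := by
    rw [← Real.exp_log (show (0:ℝ) < Y / X by positivity)]
    apply Real.exp_le_exp.2
    have h2 : Real.log (Y / X) = -Real.log (X / Y) := by
      rw [← Real.log_inv, inv_div]
    rw [h2]
    nlinarith [hlog]
  have h3 : Real.exp (-(μ / C)) ^ N = Real.exp ((N : ℝ) * -(μ / C)) :=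
    (Real.exp_nat_mul _ N).symm
  rw [h3]
  calc Real.exp ((N : ℝ) * -(μ / C)) * X ≤ Y / X * X := by
        exact mul_le_mul_of_nonneg_right h1 hX.le
    _ = Y := div_mul_cancel₀ Y (ne_of_gt hX)


set_option maxHeartbeats 1000000 in
/-- Iteration complexity of greedy coordinate descent with exact coordinate
line optimization under coordinate-wise glocal (L, L_*, δ)-smoothness and μ₁-strong
convexity in the 1-norm. -/
theorem greedy_cd_glocal_complexity {d : ℕ}
    (f : EuclideanSpace ℝ (Fin d) → ℝ)
    (f' : EuclideanSpace ℝ (Fin d) → EuclideanSpace ℝ (Fin d))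
    (L Ls δ ε μ₁ fstar : ℝ)
    (hL : 0 < L) (hLs : 0 < Ls) (hμ₁ : 0 < μ₁)
    (hdiff : ∀ x, HasGradientAt f (f' x) x)
    (hglob : ∀ (u : EuclideanSpace ℝ (Fin d)) (j : Fin d) (α : ℝ),
      |f' (u + α • EuclideanSpace.single j (1 : ℝ)) j - f' u j| ≤ L * |α|)
    (hloc : ∀ (u : EuclideanSpace ℝ (Fin d)) (j : Fin d) (α : ℝ),
      f u - fstar ≤ δ → f (u + α • EuclideanSpace.single j (1 : ℝ)) - fstar ≤ δ →
      |f' (u + α • EuclideanSpace.single j (1 : ℝ)) j - f' u j| ≤ Ls * |α|)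
    (hsc : ∀ u v : EuclideanSpace ℝ (Fin d),
      f v ≥ f u + ⟪f' u, v - u⟫ + μ₁ / 2 * (∑ i, |v i - u i|) ^ 2)
    (hmin : ∃ wstar, f wstar = fstar ∧ ∀ x, fstar ≤ f x)
    (w : ℕ → EuclideanSpace ℝ (Fin d)) (jt : ℕ → Fin d)
    (hΔδ : f (w 0) - fstar > δ) (hδε : δ > ε) (hε : ε > 0)
    (hgreedy : ∀ (t : ℕ) (j : Fin d), |f' (w t) j| ≤ |f' (w t) (jt t)|)
    (hstep : ∀ t : ℕ,
      (∃ η : ℝ, w (t + 1) =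
        w t - (η * f' (w t) (jt t)) • EuclideanSpace.single (jt t) (1 : ℝ)) ∧
      ∀ η : ℝ, f (w (t + 1)) ≤
        f (w t - (η * f' (w t) (jt t)) • EuclideanSpace.single (jt t) (1 : ℝ))) :
    ∀ T : ℕ,
      (⌈L / μ₁ * Real.log ((f (w 0) - fstar) / δ)⌉ + ⌈Ls / μ₁ * Real.log (δ / ε)⌉ : ℤ) ≤ T →
      f (w T) - fstar ≤ ε := by
  have hδ : 0 < δ := lt_trans hε hδε
  have hΔ0 : 0 < f (w 0) - fstar := lt_trans hδ hΔδ
  obtain ⟨ws, hws, hlb⟩ := hmin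
  have hnonneg : ∀ x, 0 ≤ f x - fstar := fun x => by linarith [hlb x]
  -- point rewriting
  have hpt : ∀ (t : ℕ) (C : ℝ),
      w t - (1 / C * f' (w t) (jt t)) • EuclideanSpace.single (jt t) (1:ℝ) =
      w t + (-(f' (w t) (jt t) / C)) • EuclideanSpace.single (jt t) (1:ℝ) := by
    intro t C
    rw [sub_eq_add_neg, ← neg_smul]
    have : -(1 / C * f' (w t) (jt t)) = -(f' (w t) (jt t) / C) := by ring
    rw [this]
  -- Polyak–Łojasiewicz type bound
  have hPL : ∀ t : ℕ, 2 * μ₁ * (f (w t) - fstar) ≤ (f' (w t) (jt t)) ^ 2 := by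
    intro t
    have := pl_lemma f f' μ₁ fstar hμ₁ hsc ⟨ws, hws, hlb⟩ (w t)
      |f' (w t) (jt t)| (hgreedy t)
    rwa [sq_abs] at this
  -- one-step contraction with constant C given a decrease estimate
  have hcontract : ∀ (t : ℕ) (C : ℝ), 0 < C →
      f (w (t+1)) ≤ f (w t) - (f' (w t) (jt t)) ^ 2 / (2 * C) →
      f (w (t+1)) - fstar ≤ Real.exp (-(μ₁ / C)) * (f (w t) - fstar) := by
    intro t C hC hdec
    have hexp : 1 - μ₁ / C ≤ Real.exp (-(μ₁ / C)) := by
      linarith [Real.add_one_le_exp (-(μ₁ / C))]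
    have h1 : f (w t) - fstar - (f' (w t) (jt t)) ^ 2 / (2 * C) ≤
        (1 - μ₁ / C) * (f (w t) - fstar) := by
      rw [sub_le_iff_le_add]
      have h2 : μ₁ / C * (f (w t) - fstar) ≤ (f' (w t) (jt t)) ^ 2 / (2 * C) := by
        rw [div_mul_eq_mul_div, div_le_div_iff₀ hC (by positivity)]
        nlinarith [mul_le_mul_of_nonneg_right (hPL t) hC.le]
      linarith [h2]
    linarith [h1, hdec, mul_nonneg (sub_nonneg.2 hexp) (hnonneg (w t))]
  -- one global step
  have hstep_glob : ∀ t : ℕ,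
      f (w (t+1)) - fstar ≤ Real.exp (-(μ₁ / L)) * (f (w t) - fstar) := by
    intro t
    apply hcontract t L hL
    have hd := descent_lemma f f' hdiff (w t) (jt t) (-(f' (w t) (jt t) / L)) L
      (fun β _ _ => hglob (w t) (jt t) β)
    have h2 := (hstep t).2 (1 / L)
    rw [hpt t L] at h2
    have h3 : (-(f' (w t) (jt t) / L)) * f' (w t) (jt t) +
        L / 2 * (-(f' (w t) (jt t) / L)) ^ 2 = -((f' (w t) (jt t)) ^ 2 / (2 * L)) := by
      field_simp
      ring
    calc f (w (t+1)) ≤ f (w t + (-(f' (w t) (jt t) / L)) • EuclideanSpace.single (jt t) 1) :=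
          h2
      _ ≤ f (w t) + (-(f' (w t) (jt t) / L)) * f' (w t) (jt t) +
          L / 2 * (-(f' (w t) (jt t) / L)) ^ 2 := hd
      _ = f (w t) - (f' (w t) (jt t)) ^ 2 / (2 * L) := by rw [add_assoc, h3]; ring
  -- one local step
  have hstep_loc : ∀ t : ℕ, f (w t) - fstar ≤ δ →
      f (w (t+1)) - fstar ≤ Real.exp (-(μ₁ / Ls)) * (f (w t) - fstar) := by
    intro t ht
    apply hcontract t Ls hLs
    have hd := local_decrease f f' L Ls δ μ₁ fstar hL hLs hμ₁ hdiff hglob hloc hsc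
      (w t) (jt t) ht
    have h2 := (hstep t).2 (1 / Ls)
    rw [hpt t Ls] at h2
    exact h2.trans hd
  -- iterate the global phase
  have hiter_glob : ∀ t : ℕ,
      f (w t) - fstar ≤ Real.exp (-(μ₁ / L)) ^ t * (f (w 0) - fstar) := by
    intro t
    induction t with
    | zero => simp
    | succ n ih =>
        calc f (w (n+1)) - fstar ≤ Real.exp (-(μ₁ / L)) * (f (w n) - fstar) :=
              hstep_glob n
          _ ≤ Real.exp (-(μ₁ / L)) * (Real.exp (-(μ₁ / L)) ^ n * (f (w 0) - fstar)) :=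
              mul_le_mul_of_nonneg_left ih (Real.exp_pos _).le
          _ = Real.exp (-(μ₁ / L)) ^ (n+1) * (f (w 0) - fstar) := by ring
  intro T hT
  set T1 : ℤ := ⌈L / μ₁ * Real.log ((f (w 0) - fstar) / δ)⌉ with hT1
  set T2 : ℤ := ⌈Ls / μ₁ * Real.log (δ / ε)⌉ with hT2
  have hT1pos : 0 < T1 := by
    rw [hT1]
    apply Int.ceil_pos.2
    apply mul_pos (by positivity)
    apply Real.log_pos
    rw [lt_div_iff₀ hδ]
    linarith
  have hT2pos : 0 < T2 := by
    rw [hT2]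
    apply Int.ceil_pos.2
    apply mul_pos (by positivity)
    apply Real.log_pos
    rw [lt_div_iff₀ hε]
    linarith
  set N1 : ℕ := T1.toNat with hN1
  set N2 : ℕ := T2.toNat with hN2
  have hN1c : (N1 : ℤ) = T1 := Int.toNat_of_nonneg hT1pos.le
  have hN2c : (N2 : ℤ) = T2 := Int.toNat_of_nonneg hT2pos.le
  -- after N1 steps we are in the sublevel set
  have hphase1 : f (w N1) - fstar ≤ δ := by
    have h1 := hiter_glob N1
    have h2 : L / μ₁ * Real.log ((f (w 0) - fstar) / δ) ≤ (N1 : ℝ) := by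
      have := Int.le_ceil (L / μ₁ * Real.log ((f (w 0) - fstar) / δ))
      rw [← hT1] at this
      have hcast : ((N1 : ℤ) : ℝ) = (N1 : ℝ) := by push_cast; ring
      rw [← hcast, hN1c]
      exact this
    have := exp_pow_bound μ₁ L (f (w 0) - fstar) δ hμ₁ hL hΔ0 hδ N1 h2
    linarith
  -- local phase
  have hphase2 : ∀ s : ℕ,
      f (w (N1 + s)) - fstar ≤ Real.exp (-(μ₁ / Ls)) ^ s * δ := by
    intro s
    induction s with
    | zero => simpa using hphase1
    | succ n ih =>
        have hb0 : (0:ℝ) ≤ Real.exp (-(μ₁ / Ls)) := (Real.exp_pos _).le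
        have hb1 : Real.exp (-(μ₁ / Ls)) ≤ 1 := by
          rw [Real.exp_le_one_iff]
          have h9 : 0 ≤ μ₁ / Ls := by positivity
          linarith
        have hpow1 : Real.exp (-(μ₁ / Ls)) ^ n ≤ 1 := pow_le_one₀ hb0 hb1
        have hcur : f (w (N1 + n)) - fstar ≤ δ := by
          calc f (w (N1 + n)) - fstar ≤ Real.exp (-(μ₁ / Ls)) ^ n * δ := ih
            _ ≤ 1 * δ := mul_le_mul_of_nonneg_right hpow1 hδ.le
            _ = δ := one_mul δ
        have hstep' := hstep_loc (N1 + n) hcur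
        have hadd : N1 + (n + 1) = (N1 + n) + 1 := by omega
        rw [hadd]
        calc f (w ((N1 + n) + 1)) - fstar
            ≤ Real.exp (-(μ₁ / Ls)) * (f (w (N1 + n)) - fstar) := hstep'
          _ ≤ Real.exp (-(μ₁ / Ls)) * (Real.exp (-(μ₁ / Ls)) ^ n * δ) :=
              mul_le_mul_of_nonneg_left ih hb0
          _ = Real.exp (-(μ₁ / Ls)) ^ (n + 1) * δ := by ring
  -- conclude
  have hTN : N1 + N2 ≤ T := by
    have h9 : (N1 : ℤ) + (N2 : ℤ) ≤ (T : ℤ) := by rw [hN1c, hN2c]; exact hT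
    exact_mod_cast h9
  have hT' : T = N1 + (T - N1) := by omega
  have h1 := hphase2 (T - N1)
  rw [← hT'] at h1
  have hs2 : N2 ≤ T - N1 := by omega
  have hb0 : (0:ℝ) ≤ Real.exp (-(μ₁ / Ls)) := (Real.exp_pos _).le
  have hb1 : Real.exp (-(μ₁ / Ls)) ≤ 1 := by
    rw [Real.exp_le_one_iff]
    have h9 : 0 ≤ μ₁ / Ls := by positivity
    linarith
  have hpow : Real.exp (-(μ₁ / Ls)) ^ (T - N1) ≤ Real.exp (-(μ₁ / Ls)) ^ N2 :=
    pow_le_pow_of_le_one hb0 hb1 hs2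
  have h2 : Real.exp (-(μ₁ / Ls)) ^ N2 * δ ≤ ε := by
    apply exp_pow_bound μ₁ Ls δ ε hμ₁ hLs hδ hε N2
    have h9 := Int.le_ceil (Ls / μ₁ * Real.log (δ / ε))
    rw [← hT2] at h9
    have hcast : ((N2 : ℤ) : ℝ) = (N2 : ℝ) := by push_cast; ring
    rw [← hcast, hN2c]
    exact h9
  calc f (w T) - fstar ≤ Real.exp (-(μ₁ / Ls)) ^ (T - N1) * δ := h1
    _ ≤ Real.exp (-(μ₁ / Ls)) ^ N2 * δ := mul_le_mul_of_nonneg_right hpow hδ.le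
    _ ≤ ε := h2
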